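/- Suppose $\alpha \ne 0$ and the real parameters $a, b, d_1, d_2$ satisfy $\Lambda_2'\,a - \Lambda_2\,b - \Lambda_4\,d_1 - \Lambda_6\,d_2 = 0$. Then $d_1 = \frac{1}{4}a - \Lambda_{24}\,b - \Lambda_{d_2}\left(d_2 - \frac{1}{3}\alpha a\right)$, where $\Lambda_{24} = \Lambda_2/\Lambda_4$ and $\Lambda_{d_2} = \Lambda_6/\Lambda_4$. -/

import Mathlib

open MeasureTheory Real Set Filter

lemma even_integrable_of_integrableOn_Ioi {f : ℝ → ℝ} (hf : ∀ x, f (-x) = f x)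
    (h : IntegrableOn f (Ioi 0)) : Integrable f := by
  have int_Iic : IntegrableOn f (Iic 0) := by
    rw [← Measure.map_neg_eq_self (volume : Measure ℝ)]
    have m : MeasurableEmbedding fun x : ℝ => -x := (Homeomorph.neg ℝ).measurableEmbedding
    rw [m.integrableOn_map_iff]
    simp_rw [Function.comp_def, hf, neg_preimage, neg_Iic, neg_zero]
    exact Iff.mpr integrableOn_Ici_iff_integrableOn_Ioi h
  have h2 := int_Iic.union h
  rwa [Iic_union_Ioi, integrableOn_univ] at h2

set_option maxHeartbeats 1000000 in
/-- If `α ≠ 0` and `Λ₂' a - Λ₂ b - Λ₄ d₁ - Λ₆ d₂ = 0`, then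
`d₁ = (1/4) a - Λ₂₄ b - Λ_{d₂} (d₂ - (1/3) α a)`, where `Λ₂₄ = Λ₂/Λ₄` and
`Λ_{d₂} = Λ₆/Λ₄`. -/
theorem stmt9 (ω α β a b d1 d2 : ℝ) (hω : 0 < ω) (hβ : β = -(16 / 3) * α * ω)
    (hβ0 : 0 ≤ β) (hβ1 : β < 1) (hα : α ≠ 0)
    (R0 : ℝ → ℝ)
    (hR0 : ∀ z : ℝ, R0 z =
      Real.sqrt (4 * ω / (1 + Real.sqrt (1 - β) * Real.cosh (2 * Real.sqrt ω * z))))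
    (hcond : (∫ s : ℝ, (deriv R0 s) ^ 2) * a - (∫ s : ℝ, (R0 s) ^ 2) * b
      - (∫ s : ℝ, (R0 s) ^ 4) * d1 - (∫ s : ℝ, (R0 s) ^ 6) * d2 = 0) :
    d1 = (1 / 4) * a
      - ((∫ s : ℝ, (R0 s) ^ 2) / (∫ s : ℝ, (R0 s) ^ 4)) * b
      - ((∫ s : ℝ, (R0 s) ^ 6) / (∫ s : ℝ, (R0 s) ^ 4)) * (d2 - (1 / 3) * α * a) := by
  have h1β : (0:ℝ) < 1 - β := by linarith
  set c : ℝ := Real.sqrt (1 - β) with hcdef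
  have hc : 0 < c := Real.sqrt_pos.mpr h1β
  have hc2 : c ^ 2 = 1 - β := Real.sq_sqrt h1β.le
  set t : ℝ := 2 * Real.sqrt ω with htdef
  have ht : 0 < t := by
    have h := Real.sqrt_pos.mpr hω
    have : t = 2 * Real.sqrt ω := htdef
    linarith
  have ht2 : t ^ 2 = 4 * ω := by
    have h : t = 2 * Real.sqrt ω := htdef
    rw [h, mul_pow, Real.sq_sqrt hω.le]; ring
  clear_value c t
  clear hcdef htdef
  set g : ℝ → ℝ := fun z => 1 + c * Real.cosh (t * z) with hgdef
  have hgpos : ∀ z, 0 < g z := fun z => by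
    have h := Real.one_le_cosh (t * z); simp only [hgdef]; nlinarith
  have hg1 : ∀ z, 1 + c ≤ g z := fun z => by
    have h := Real.one_le_cosh (t * z); simp only [hgdef]; nlinarith
  have hR0fun : R0 = fun z => Real.sqrt (4 * ω / g z) := by
    funext z; rw [hR0 z]
  subst hR0fun
  clear hR0
  clear_value g
  -- basic derivative facts
  have hgderiv : ∀ z, HasDerivAt g (c * (t * Real.sinh (t * z))) z := by
    intro z
    rw [hgdef]
    have h1 : HasDerivAt (fun z : ℝ => t * z) t z := by
      simpa using (hasDerivAt_id z).const_mul t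
    simpa [mul_comm] using (((Real.hasDerivAt_cosh (t * z)).comp z h1).const_mul c).const_add 1
  have hu : ∀ z, HasDerivAt (fun z => 4 * ω / g z)
      (-(4 * ω) * (c * (t * Real.sinh (t * z))) / (g z) ^ 2) z := by
    intro z
    have h2 := ((hgderiv z).inv (hgpos z).ne').const_mul (4 * ω)
    simp only [div_eq_mul_inv]
    convert h2 using 1
    · rfl
    · rfl
    · funext y; simp [div_eq_mul_inv]
    · ring
  have hupos : ∀ z, 0 < 4 * ω / g z := fun z => div_pos (by positivity) (hgpos z)
  have hRderiv : ∀ z, HasDerivAt (fun z => Real.sqrt (4 * ω / g z))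
      (-(4 * ω) * (c * (t * Real.sinh (t * z))) / (g z) ^ 2 / (2 * Real.sqrt (4 * ω / g z))) z := by
    intro z
    have h2 := (Real.hasDerivAt_sqrt (hupos z).ne').comp z (hu z)
    simpa [div_eq_mul_inv, mul_comm, Function.comp_def] using h2
  have hder : ∀ z, deriv (fun z => Real.sqrt (4 * ω / g z)) z
      = -(4 * ω) * (c * (t * Real.sinh (t * z))) / (g z) ^ 2 / (2 * Real.sqrt (4 * ω / g z)) :=
    fun z => (hRderiv z).deriv
  -- pointwise power identities
  have hsq0 : ∀ z, Real.sqrt (4 * ω / g z) ^ 2 = 4 * ω / g z := fun z => Real.sq_sqrt (hupos z).le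
  have hsq : ∀ z, Real.sqrt (4 * ω / g z) ^ 2 = 4 * ω * (g z)⁻¹ := fun z => by
    rw [hsq0 z, div_eq_mul_inv]
  have hp4 : ∀ z, Real.sqrt (4 * ω / g z) ^ 4 = 16 * ω ^ 2 * ((g z)⁻¹) ^ 2 := fun z => by
    rw [show (4:ℕ) = 2 * 2 from rfl, pow_mul, hsq0 z, div_eq_mul_inv, mul_pow]; ring
  have hp6 : ∀ z, Real.sqrt (4 * ω / g z) ^ 6 = 64 * ω ^ 3 * ((g z)⁻¹) ^ 3 := fun z => by
    rw [show (6:ℕ) = 2 * 3 from rfl, pow_mul, hsq0 z, div_eq_mul_inv, mul_pow]; ring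
  have hd2 : ∀ z, (deriv (fun z => Real.sqrt (4 * ω / g z)) z) ^ 2
      = 4 * ω ^ 2 * ((g z)⁻¹ - 2 * ((g z)⁻¹) ^ 2 + β * ((g z)⁻¹) ^ 3) := by
    intro z
    rw [hder z]
    have hS : Real.sinh (t * z) ^ 2 = Real.cosh (t * z) ^ 2 - 1 := Real.sinh_sq _
    have hgne : (1 : ℝ) + c * Real.cosh (t * z) ≠ 0 := by
      have := hgpos z; rw [hgdef] at this; exact ne_of_gt this
    rw [div_pow, div_pow, mul_pow, mul_pow, mul_pow, mul_pow, hsq0, hS, ht2,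
      show β = 1 - c ^ 2 from by linarith]
    rw [hgdef]
    field_simp
    ring
  -- integrability
  have hcont : Continuous fun z => (g z)⁻¹ := by
    rw [hgdef]
    apply Continuous.inv₀
    · exact continuous_const.add
        (continuous_const.mul (Real.continuous_cosh.comp (continuous_const.mul continuous_id)))
    · intro z
      have := hgpos z; rw [hgdef] at this; exact ne_of_gt this
  have hI1 : Integrable (fun z : ℝ => (g z)⁻¹) := by
    apply even_integrable_of_integrableOn_Ioi
    · intro x
      have : g (-x) = g x := by rw [hgdef]; simp [mul_neg, Real.cosh_neg]
      rw [this]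
    · have hdom : IntegrableOn (fun x : ℝ => 2 / c * Real.exp (-t * x)) (Ioi 0) :=
        (exp_neg_integrableOn_Ioi 0 ht).const_mul _
      apply Integrable.mono' hdom hcont.aestronglyMeasurable.restrict
      filter_upwards with x
      have hC : 0 < Real.cosh (t * x) := Real.cosh_pos _
      have hle : Real.exp (t * x) / 2 ≤ Real.cosh (t * x) := by
        rw [Real.cosh_eq]; have := (Real.exp_pos (-(t * x))).le; linarith
      have h1 : c * (Real.exp (t * x) / 2) ≤ g x := by
        have h2 : c * (Real.exp (t * x) / 2) ≤ c * Real.cosh (t * x) :=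
          mul_le_mul_of_nonneg_left hle hc.le
        rw [hgdef]; dsimp only; linarith
      have h2 : 0 < c * (Real.exp (t * x) / 2) := by positivity
      have h3 : (g x)⁻¹ ≤ (c * (Real.exp (t * x) / 2))⁻¹ := inv_anti₀ h2 h1
      have h4 : (c * (Real.exp (t * x) / 2))⁻¹ = 2 / c * Real.exp (-t * x) := by
        rw [neg_mul, Real.exp_neg]; field_simp
      rw [Real.norm_eq_abs, abs_of_pos (inv_pos.mpr (hgpos x))]
      rw [← h4]; exact h3
  have hIpow : ∀ k : ℕ, 1 ≤ k → Integrable (fun z : ℝ => ((g z)⁻¹) ^ k) := by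
    intro k hk
    apply Integrable.mono' hI1 ((hcont.pow k).aestronglyMeasurable)
    filter_upwards with x
    have h0 : 0 < (g x)⁻¹ := inv_pos.mpr (hgpos x)
    have h1 : (g x)⁻¹ ≤ 1 := by
      rw [inv_le_one_iff₀]; right; linarith [hg1 x, hc]
    rw [Real.norm_eq_abs]; simp only [Pi.pow_apply]; rw [abs_of_pos (pow_pos h0 k)]
    calc ((g x)⁻¹) ^ k ≤ ((g x)⁻¹) ^ 1 := pow_le_pow_of_le_one h0.le h1 hk
      _ = (g x)⁻¹ := pow_one _
  have hI2 := hIpow 2 (by norm_num)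
  have hI3 := hIpow 3 (by norm_num)
  set J1 : ℝ := ∫ z : ℝ, (g z)⁻¹ with hJ1def
  set J2 : ℝ := ∫ z : ℝ, ((g z)⁻¹) ^ 2 with hJ2def
  set J3 : ℝ := ∫ z : ℝ, ((g z)⁻¹) ^ 3 with hJ3def
  -- the integrals in the statement
  have hΛ2 : (∫ s : ℝ, Real.sqrt (4 * ω / g s) ^ 2) = 4 * ω * J1 := by
    simp_rw [hsq]; rw [integral_const_mul]
  have hΛ4 : (∫ s : ℝ, Real.sqrt (4 * ω / g s) ^ 4) = 16 * ω ^ 2 * J2 := by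
    simp_rw [hp4]; rw [integral_const_mul]
  have hΛ6 : (∫ s : ℝ, Real.sqrt (4 * ω / g s) ^ 6) = 64 * ω ^ 3 * J3 := by
    simp_rw [hp6]; rw [integral_const_mul]
  have hlin : ∀ r q : ℝ, (∫ z : ℝ, ((g z)⁻¹ - r * ((g z)⁻¹) ^ 2 + q * ((g z)⁻¹) ^ 3))
      = J1 - r * J2 + q * J3 := by
    intro r q
    have hsubI : Integrable (fun z : ℝ => (g z)⁻¹ - r * ((g z)⁻¹) ^ 2) :=
      hI1.sub (hI2.const_mul r)
    have hmulI : Integrable (fun z : ℝ => q * ((g z)⁻¹) ^ 3) := hI3.const_mul q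
    have e1 : (∫ z : ℝ, ((g z)⁻¹ - r * ((g z)⁻¹) ^ 2 + q * ((g z)⁻¹) ^ 3))
        = (∫ z : ℝ, ((g z)⁻¹ - r * ((g z)⁻¹) ^ 2)) + ∫ z : ℝ, q * ((g z)⁻¹) ^ 3 :=
      integral_add hsubI hmulI
    have e2 : (∫ z : ℝ, ((g z)⁻¹ - r * ((g z)⁻¹) ^ 2))
        = (∫ z : ℝ, (g z)⁻¹) - ∫ z : ℝ, r * ((g z)⁻¹) ^ 2 :=
      integral_sub hI1 (hI2.const_mul r)
    rw [e1, e2, integral_const_mul, integral_const_mul]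
  have hΛd : (∫ s : ℝ, (deriv (fun z => Real.sqrt (4 * ω / g z)) s) ^ 2)
      = 4 * ω ^ 2 * (J1 - 2 * J2 + β * J3) := by
    simp_rw [hd2]
    rw [integral_const_mul, hlin 2 β]
  -- FTC: integral of the derivative of F is zero
  set F : ℝ → ℝ := fun z => -(2 * ω) * (c * (t * Real.sinh (t * z))) / (g z) ^ 2 with hFdef
  set φ : ℝ → ℝ := fun z =>
    8 * ω ^ 2 * ((g z)⁻¹ - 3 * ((g z)⁻¹) ^ 2 + 2 * β * ((g z)⁻¹) ^ 3) with hφdef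
  have hφint : Integrable φ := by
    rw [hφdef]
    exact ((hI1.sub (hI2.const_mul 3)).add (hI3.const_mul (2 * β))).const_mul (8 * ω ^ 2)
  have hF : ∀ z, HasDerivAt F (φ z) z := by
    intro z
    have h1 : HasDerivAt (fun z : ℝ => t * z) t z := by
      simpa using (hasDerivAt_id z).const_mul t
    have hN : HasDerivAt (fun z : ℝ => -(2 * ω) * (c * (t * Real.sinh (t * z))))
        (-(2 * ω) * (c * (t * (Real.cosh (t * z) * t)))) z := by
      have h2 := (Real.hasDerivAt_sinh (t * z)).comp z h1
      exact (((h2.const_mul t).const_mul c)).const_mul _ |>.congr_deriv (by ring)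
    have hD : HasDerivAt (fun z => (g z) ^ 2) (2 * (g z) * (c * (t * Real.sinh (t * z)))) z := by
      have h2 := (hgderiv z).pow 2
      simpa [mul_comm, mul_assoc, Pi.pow_def] using h2
    have hdiv := hN.fun_div hD (pow_pos (hgpos z) 2).ne'
    rw [hFdef]
    convert hdiv using 1
    · rfl
    · rfl
    have hS : Real.sinh (t * z) ^ 2 = Real.cosh (t * z) ^ 2 - 1 := Real.sinh_sq _
    have hgne : (1 : ℝ) + c * Real.cosh (t * z) ≠ 0 := by
      have := hgpos z; rw [hgdef] at this; exact ne_of_gt this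
    rw [hφdef]
    dsimp only
    rw [show β = 1 - c ^ 2 from by linarith]
    rw [show -(2 * ω) * (c * (t * (Real.cosh (t * z) * t)))
        = -(2 * ω) * (c * Real.cosh (t * z)) * t ^ 2 from by ring, ht2]
    rw [show -(2 * ω) * (c * (t * Real.sinh (t * z))) * (2 * g z * (c * (t * Real.sinh (t * z))))
        = -(4 * ω) * g z * (c ^ 2 * (Real.sinh (t * z) ^ 2 * t ^ 2)) from by ring, hS, ht2]
    rw [hgdef]
    dsimp only
    field_simp
    ring
  -- bounds and limits for F
  have hbound : ∀ z, ‖F z‖ ≤ 2 * ω * t / c * (Real.cosh (t * z))⁻¹ := by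
    intro z
    have hC : 0 < Real.cosh (t * z) := Real.cosh_pos _
    have hS : |Real.sinh (t * z)| ≤ Real.cosh (t * z) := by
      nlinarith [Real.sinh_sq (t * z), sq_abs (Real.sinh (t * z)), abs_nonneg (Real.sinh (t * z))]
    have hgc : c * Real.cosh (t * z) ≤ g z := by rw [hgdef]; dsimp only; linarith
    have h1 : ‖F z‖ = 2 * ω * (c * (t * |Real.sinh (t * z)|)) / (g z) ^ 2 := by
      rw [Real.norm_eq_abs, hFdef]
      dsimp only
      rw [abs_div, abs_mul, abs_mul, abs_mul, abs_neg, abs_of_pos (by positivity : (0:ℝ) < 2 * ω),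
        abs_of_pos hc, abs_of_pos ht, abs_of_pos (pow_pos (hgpos z) 2)]
    rw [h1]
    have h2 : 2 * ω * (c * (t * |Real.sinh (t * z)|)) / (g z) ^ 2
        ≤ 2 * ω * (c * (t * Real.cosh (t * z))) / (c * Real.cosh (t * z)) ^ 2 := by
      gcongr
    refine h2.trans (le_of_eq ?_)
    field_simp
  have hcoshTop : Tendsto (fun z : ℝ => Real.cosh (t * z)) atTop atTop := by
    apply tendsto_atTop_mono (f := fun z : ℝ => Real.exp (t * z) / 2)
    · intro z; rw [Real.cosh_eq]; have := (Real.exp_pos (-(t * z))).le; linarith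
    · exact (Real.tendsto_exp_atTop.comp (tendsto_id.const_mul_atTop ht)).atTop_div_const two_pos
  have hcoshBot : Tendsto (fun z : ℝ => Real.cosh (t * z)) atBot atTop := by
    apply tendsto_atTop_mono (f := fun z : ℝ => Real.exp (-(t * z)) / 2)
    · intro z; rw [Real.cosh_eq]; have := (Real.exp_pos (t * z)).le; linarith
    · refine (Real.tendsto_exp_atTop.comp ?_).atTop_div_const two_pos
      have h5 : Tendsto (fun z : ℝ => -z) atBot atTop := tendsto_neg_atBot_atTop
      have h6 := h5.const_mul_atTop ht
      simpa [mul_comm, neg_mul, mul_neg] using h6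
  have htop : Tendsto F atTop (nhds 0) := by
    apply squeeze_zero_norm hbound
    rw [show (0:ℝ) = 2 * ω * t / c * 0 by ring]
    exact (hcoshTop.inv_tendsto_atTop).const_mul _
  have hbot : Tendsto F atBot (nhds 0) := by
    apply squeeze_zero_norm hbound
    rw [show (0:ℝ) = 2 * ω * t / c * 0 by ring]
    exact (hcoshBot.inv_tendsto_atTop).const_mul _
  have hF0 : F 0 = 0 := by
    rw [hFdef]; simp
  have hIoi : (∫ z in Ioi (0:ℝ), φ z) = 0 - F 0 :=
    integral_Ioi_of_hasDerivAt_of_tendsto' (fun x _ => hF x) hφint.integrableOn htop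
  have hIic : (∫ z in Iic (0:ℝ), φ z) = F 0 - 0 :=
    integral_Iic_of_hasDerivAt_of_tendsto' (fun x _ => hF x) hφint.integrableOn hbot
  have hsum : (∫ z : ℝ, φ z) = 0 := by
    rw [← intervalIntegral.integral_Iic_add_Ioi (b := (0:ℝ)) hφint.integrableOn hφint.integrableOn,
      hIoi, hIic, hF0]
    ring
  have hφval : (∫ z : ℝ, φ z) = 8 * ω ^ 2 * (J1 - 3 * J2 + 2 * β * J3) := by
    rw [hφdef]
    rw [integral_const_mul, hlin 3 (2 * β)]
  have hJrel : J1 - 3 * J2 + 2 * β * J3 = 0 := by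
    have h8 : (8 : ℝ) * ω ^ 2 ≠ 0 := by positivity
    have := hsum
    rw [hφval] at this
    exact (mul_eq_zero.mp this).resolve_left h8
  -- positivity of J2
  have hJ2pos : 0 < J2 := by
    rw [hJ2def]
    rw [integral_pos_iff_support_of_nonneg (fun z => by positivity) hI2]
    have hsupp : Function.support (fun z : ℝ => ((g z)⁻¹) ^ 2) = univ :=
      Set.eq_univ_iff_forall.mpr fun z => pow_ne_zero 2 (inv_ne_zero (hgpos z).ne')
    rw [hsupp, Real.volume_univ]
    exact ENNReal.zero_lt_top
  -- final algebra
  clear_value J1 J2 J3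
  clear hJ1def hJ2def hJ3def hFdef hφdef hF hφint hbound htop hbot hF0 hIoi hIic hsum hφval
  clear F φ
  beta_reduce at hcond ⊢
  rw [hΛ2, hΛ4, hΛ6, hΛd] at hcond
  rw [hΛ2, hΛ4, hΛ6]
  have hne : (0:ℝ) < 16 * ω ^ 2 * J2 := mul_pos (by positivity) hJ2pos
  have e1 : 16 * ω ^ 2 * J2 * (4 * ω * J1 / (16 * ω ^ 2 * J2) * b) = 4 * ω * J1 * b := by
    rw [show 16 * ω ^ 2 * J2 * (4 * ω * J1 / (16 * ω ^ 2 * J2) * b)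
        = 4 * ω * J1 * b * (16 * ω ^ 2 * J2 / (16 * ω ^ 2 * J2)) from by ring,
      div_self hne.ne', mul_one]
  have e2 : 16 * ω ^ 2 * J2 * (64 * ω ^ 3 * J3 / (16 * ω ^ 2 * J2) * (d2 - 1 / 3 * α * a))
      = 64 * ω ^ 3 * J3 * (d2 - 1 / 3 * α * a) := by
    rw [show 16 * ω ^ 2 * J2 * (64 * ω ^ 3 * J3 / (16 * ω ^ 2 * J2) * (d2 - 1 / 3 * α * a))
        = 64 * ω ^ 3 * J3 * (d2 - 1 / 3 * α * a) * (16 * ω ^ 2 * J2 / (16 * ω ^ 2 * J2)) from by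
          ring,
      div_self hne.ne', mul_one]
  have key : 16 * ω ^ 2 * J2 * d1 = 16 * ω ^ 2 * J2 *
      (1 / 4 * a - 4 * ω * J1 / (16 * ω ^ 2 * J2) * b
        - 64 * ω ^ 3 * J3 / (16 * ω ^ 2 * J2) * (d2 - 1 / 3 * α * a)) := by
    rw [mul_sub, mul_sub, e1, e2]
    linear_combination (-1 : ℝ) * hcond + (4 * ω ^ 2 * a) * hJrel - (4 * ω ^ 2 * a * J3) * hβ
  exact mul_left_cancel₀ hne.ne' key
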